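/- Let c > 1, α ∈ (0,1), let θ be an admissible function with respect to c and α, and let φ₁ be the measure on (0,∞) with φ₁((r,∞)) = r^{−α} θ(log r) for all r > 0. If f, f′, f″ ∈ C₀(ℝ) ∩ L¹(ℝ), then for every x ∈ ℝ the generator form of the positive semi-fractional derivative equals its Caputo form: ∫₀^∞ (f(x) − f(x−y)) dφ₁(y) = ∫₀^∞ f′(x−y) y^{−α} θ(log y) dy, and both integrals converge absolutely. -/

import Mathlib

open MeasureTheory Real Filter Set
open scoped ENNReal NNReal

noncomputable section

def IsAdmissible (c α : ℝ) (θ : ℝ → ℝ) : Prop :=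
  (∀ x, 0 < θ x) ∧
  Function.Periodic θ (Real.log (c ^ (1 / α))) ∧
  ∀ y δ : ℝ, 0 ≤ δ → θ (y + δ) ≤ Real.exp (α * δ) * θ y

/-- `f ∈ C₀(ℝ) ∩ L¹(ℝ)`: continuous, vanishing at `±∞`, and Lebesgue integrable. -/
def MemC0L1 (f : ℝ → ℝ) : Prop :=
  Continuous f ∧ Tendsto f (cocompact ℝ) (nhds 0) ∧ Integrable f

lemma bounded_of_memC0L1 {f : ℝ → ℝ} (hf : MemC0L1 f) : ∃ C, 0 ≤ C ∧ ∀ t, |f t| ≤ C := by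
  obtain ⟨hc, h0, -⟩ := hf
  have h1 : {t : ℝ | dist (f t) 0 < 1} ∈ cocompact ℝ :=
    (Metric.tendsto_nhds.mp h0) 1 one_pos
  rw [mem_cocompact] at h1
  obtain ⟨K, hK, hKsub⟩ := h1
  obtain ⟨C, hC⟩ := hK.exists_bound_of_continuousOn hc.continuousOn
  refine ⟨max C 1, le_max_of_le_right zero_le_one, fun t => ?_⟩
  by_cases ht : t ∈ K
  · simpa [Real.norm_eq_abs] using (hC t ht).trans (le_max_left C 1)
  · have h2 := hKsub ht
    simp only [Set.mem_setOf_eq, dist_zero_right, Real.norm_eq_abs] at h2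
    exact h2.le.trans (le_max_right C 1)

theorem stmt1 (c α : ℝ) (hc : 1 < c) (hα : α ∈ Set.Ioo (0 : ℝ) 1)
    (θ : ℝ → ℝ) (hθ : IsAdmissible c α θ)
    (φ₁ : Measure ℝ)
    (hφ : ∀ r : ℝ, 0 < r → φ₁ (Set.Ioi r) = ENNReal.ofReal (r ^ (-α) * θ (Real.log r)))
    (hφ0 : φ₁ (Set.Iic 0) = 0)
    (f f' f'' : ℝ → ℝ)
    (hder1 : ∀ x, HasDerivAt f (f' x) x) (hder2 : ∀ x, HasDerivAt f' (f'' x) x)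
    (hf : MemC0L1 f) (hf' : MemC0L1 f') (hf'' : MemC0L1 f'') (x : ℝ) :
    Integrable (fun y => f x - f (x - y)) φ₁ ∧
    IntegrableOn (fun y => f' (x - y) * (y ^ (-α) * θ (Real.log y))) (Set.Ioi 0) volume ∧
    ∫ y, (f x - f (x - y)) ∂φ₁
      = ∫ y in Set.Ioi (0 : ℝ), f' (x - y) * (y ^ (-α) * θ (Real.log y)) := by
  obtain ⟨hθpos, hθper, hθgrow⟩ := hθ
  obtain ⟨hα0, hα1⟩ := hα
  set p : ℝ := Real.log (c ^ (1 / α)) with hp_def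
  have hc0 : (0:ℝ) < c := lt_trans zero_lt_one hc
  have hp : 0 < p := by
    rw [hp_def, Real.log_rpow hc0]
    have := Real.log_pos hc
    positivity
  set g : ℝ → ℝ := fun t => t ^ (-α) * θ (Real.log t) with hg_def
  have hg_pos : ∀ t : ℝ, 0 < t → 0 < g t := fun t ht =>
    mul_pos (Real.rpow_pos_of_pos ht _) (hθpos _)
  -- `g` is antitone on `(0, ∞)`
  have hg_anti : ∀ s t : ℝ, 0 < s → s ≤ t → g t ≤ g s := by
    intro s t hs hst
    have ht : 0 < t := hs.trans_le hst
    have hδ : 0 ≤ Real.log t - Real.log s := sub_nonneg.2 (Real.log_le_log hs hst)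
    have h1 := hθgrow (Real.log s) (Real.log t - Real.log s) hδ
    rw [add_sub_cancel] at h1
    have hexp : Real.exp (α * (Real.log t - Real.log s)) = t ^ α / s ^ α := by
      rw [mul_sub, Real.exp_sub, Real.rpow_def_of_pos ht, Real.rpow_def_of_pos hs,
        mul_comm α (Real.log t), mul_comm α (Real.log s)]
    rw [hexp] at h1
    have htα : (0:ℝ) < t ^ α := Real.rpow_pos_of_pos ht _
    have hsα : (0:ℝ) < s ^ α := Real.rpow_pos_of_pos hs _
    have h2 : t ^ (-α) * θ (Real.log t) ≤ t ^ (-α) * (t ^ α / s ^ α * θ (Real.log s)) := by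
      have := Real.rpow_pos_of_pos ht (-α)
      nlinarith
    calc g t ≤ t ^ (-α) * (t ^ α / s ^ α * θ (Real.log s)) := h2
      _ = s ^ (-α) * θ (Real.log s) := by
          rw [Real.rpow_neg ht.le, Real.rpow_neg hs.le]
          field_simp
  -- θ is bounded
  set M : ℝ := Real.exp (α * p) * θ 0 with hM_def
  have hM0 : 0 < M := mul_pos (Real.exp_pos _) (hθpos 0)
  have hθbd : ∀ y, θ y ≤ M := by
    intro y
    have h1 : θ (y - ⌊y / p⌋ * p) = θ y := hθper.sub_int_mul_eq ⌊y / p⌋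
    set z : ℝ := y - ⌊y / p⌋ * p with hz_def
    have hz0 : 0 ≤ z := Int.sub_floor_div_mul_nonneg y hp
    have hzp : z ≤ p := (Int.sub_floor_div_mul_lt y hp).le
    have h2 := hθgrow 0 z hz0
    rw [zero_add] at h2
    calc θ y = θ z := h1.symm
      _ ≤ Real.exp (α * z) * θ 0 := h2
      _ ≤ M := by
          rw [hM_def]
          have hee : Real.exp (α * z) ≤ Real.exp (α * p) := Real.exp_le_exp.2 (by nlinarith)
          nlinarith [hθpos 0]
  have hg_le : ∀ t : ℝ, 0 < t → g t ≤ M * t ^ (-α) := by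
    intro t ht
    have := Real.rpow_pos_of_pos ht (-α)
    calc g t = t ^ (-α) * θ (Real.log t) := rfl
      _ ≤ t ^ (-α) * M := by nlinarith [hθbd (Real.log t)]
      _ = M * t ^ (-α) := mul_comm _ _
  have hg_one : g 1 = θ 0 := by
    simp [hg_def]
  -- bound on f'
  obtain ⟨C', hC'0, hC'⟩ := bounded_of_memC0L1 hf'
  -- measurability of the indicator version of g
  have hg_meas : Measurable ((Set.Ioi (0:ℝ)).indicator g) := by
    have hmono : ∀ n : ℕ, Measurable fun t : ℝ => g (max t (1 / (n + 1))) := by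
      intro n
      have hpos : (0:ℝ) < 1 / (n + 1) := by positivity
      have hanti : Antitone fun t : ℝ => g (max t (1 / (n + 1))) := by
        intro s t hst
        exact hg_anti _ _ (lt_of_lt_of_le hpos (le_max_right _ _)) (max_le_max hst le_rfl)
      exact hanti.measurable
    apply measurable_of_tendsto_metrizable
      (f := fun n : ℕ => (Set.Ioi (0:ℝ)).indicator fun t => g (max t (1 / (n + 1))))
      (fun n => (hmono n).indicator measurableSet_Ioi)
    rw [tendsto_pi_nhds]
    intro t
    by_cases ht : t ∈ Set.Ioi (0:ℝ)
    · obtain ⟨N, hN⟩ := exists_nat_one_div_lt (show (0:ℝ) < t from ht)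
      apply tendsto_const_nhds.congr'
      filter_upwards [eventually_ge_atTop N] with n hn
      have h1 : (1:ℝ) / (n + 1) ≤ 1 / (N + 1) := by
        apply one_div_le_one_div_of_le (by positivity)
        have : (N:ℝ) ≤ (n:ℝ) := Nat.cast_le.mpr hn
        linarith
      have h2 : max t (1 / (n + 1 : ℝ)) = t :=
        max_eq_left ((h1.trans hN.le))
      rw [Set.indicator_of_mem ht, Set.indicator_of_mem ht, h2]
    · simp only [Set.indicator_of_notMem (show t ∉ Set.Ioi (0:ℝ) from ht)]
      exact tendsto_const_nhds
  -- a.e. strong measurability of the Caputo integrand on `Ioi 0`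
  have hcont : Continuous fun t : ℝ => f' (x - t) :=
    hf'.1.comp (continuous_const.sub continuous_id)
  have hI_meas : AEStronglyMeasurable (fun t => f' (x - t) * g t) (volume.restrict (Set.Ioi 0)) := by
    have h1 : Measurable fun t : ℝ => f' (x - t) * (Set.Ioi (0:ℝ)).indicator g t :=
      hcont.measurable.mul hg_meas
    refine h1.aestronglyMeasurable.congr ?_
    filter_upwards [ae_restrict_mem measurableSet_Ioi] with t ht
    rw [Set.indicator_of_mem (show t ∈ Set.Ioi (0:ℝ) from ht)]
  -- claim 2: the Caputo integrand is integrable on `(0, ∞)`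
  have hCap : IntegrableOn (fun t => f' (x - t) * g t) (Set.Ioi 0) volume := by
    have hsplit : Set.Ioc (0:ℝ) 1 ∪ Set.Ioi 1 = Set.Ioi 0 := Set.Ioc_union_Ioi_eq_Ioi zero_le_one
    rw [← hsplit]
    apply IntegrableOn.union
    · -- on (0, 1]
      have hb : IntegrableOn (fun t : ℝ => C' * M * t ^ (-α)) (Set.Ioc 0 1) volume := by
        have := (intervalIntegral.intervalIntegrable_rpow' (r := -α) (a := 0) (b := 1) (by linarith)).1
        exact this.const_mul _
      refine Integrable.mono' hb (hI_meas.mono_measure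
        (Measure.restrict_mono Set.Ioc_subset_Ioi_self le_rfl)) ?_
      filter_upwards [ae_restrict_mem measurableSet_Ioc] with t ht
      have ht0 : 0 < t := ht.1
      have hgt := hg_pos t ht0
      rw [Real.norm_eq_abs, abs_mul, abs_of_pos hgt]
      calc |f' (x - t)| * g t ≤ C' * (M * t ^ (-α)) := by
            apply mul_le_mul (hC' _) (hg_le t ht0) hgt.le hC'0
        _ = C' * M * t ^ (-α) := by ring
    · -- on (1, ∞)
      have hint : Integrable (fun t : ℝ => θ 0 * |f' (x - t)|) volume :=
        ((hf'.2.2.comp_sub_left x).abs.const_mul (θ 0))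
      refine Integrable.mono' hint.integrableOn (hI_meas.mono_measure
        (Measure.restrict_mono (Set.Ioi_subset_Ioi zero_le_one) le_rfl)) ?_
      filter_upwards [ae_restrict_mem measurableSet_Ioi] with t ht
      have ht0 : (0:ℝ) < t := lt_trans one_pos ht
      have hgt := hg_pos t ht0
      rw [Real.norm_eq_abs, abs_mul, abs_of_pos hgt]
      have h1 : g t ≤ θ 0 := hg_one ▸ hg_anti 1 t one_pos ht.le
      calc |f' (x - t)| * g t ≤ |f' (x - t)| * θ 0 :=
            mul_le_mul_of_nonneg_left h1 (abs_nonneg _)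
        _ = θ 0 * |f' (x - t)| := mul_comm _ _
  -- σ-finiteness of φ₁
  have hφfin : ∀ r : ℝ, 0 < r → φ₁ (Set.Ioi r) < ⊤ := by
    intro r hr; rw [hφ r hr]; exact ENNReal.ofReal_lt_top
  haveI : SigmaFinite φ₁ := by
    refine ⟨⟨⟨fun n => Set.Iic 0 ∪ Set.Ioi (1 / (n + 1) : ℝ), fun _ => trivial, fun n => ?_, ?_⟩⟩⟩
    · refine lt_of_le_of_lt (measure_union_le _ _) ?_
      rw [hφ0, zero_add]
      exact hφfin _ (by positivity)
    · ext t
      simp only [Set.mem_iUnion, Set.mem_univ, iff_true, Set.mem_union, Set.mem_Iic, Set.mem_Ioi]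
      rcases le_or_gt t 0 with h | h
      · exact ⟨0, Or.inl h⟩
      · obtain ⟨n, hn⟩ := exists_nat_one_div_lt h
        exact ⟨n, Or.inr hn⟩
  -- the kernel for Fubini
  set S : Set (ℝ × ℝ) := {q : ℝ × ℝ | 0 < q.2 ∧ q.2 < q.1} with hS_def
  have hS : MeasurableSet S :=
    (measurableSet_lt measurable_const measurable_snd).inter
      (measurableSet_lt measurable_snd measurable_fst)
  set F : ℝ × ℝ → ℝ := S.indicator (fun q => f' (x - q.2)) with hF_def
  have hF_sm : StronglyMeasurable F :=
    ((hf'.1.comp (continuous_const.sub continuous_snd)).stronglyMeasurable).indicator hS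
  have hF_int : Integrable F (φ₁.prod volume) := by
    refine ⟨hF_sm.aestronglyMeasurable, ?_⟩
    rw [hasFiniteIntegral_def]
    simp only [enorm_eq_nnnorm]
    have h1 : (∫⁻ q, (‖F q‖₊ : ℝ≥0∞) ∂(φ₁.prod volume))
        = ∫⁻ t, ∫⁻ y, (‖F (y, t)‖₊ : ℝ≥0∞) ∂φ₁ ∂volume :=
      lintegral_prod_symm _ (hF_sm.measurable.nnnorm.coe_nnreal_ennreal.aemeasurable)
    rw [h1]
    have h2 : ∀ t : ℝ, (∫⁻ y, (‖F (y, t)‖₊ : ℝ≥0∞) ∂φ₁)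
        = (Set.Ioi (0:ℝ)).indicator (fun t => (‖f' (x - t)‖₊ : ℝ≥0∞) * φ₁ (Set.Ioi t)) t := by
      intro t
      by_cases ht : 0 < t
      · have h3 : (fun y => (‖F (y, t)‖₊ : ℝ≥0∞))
            = (Set.Ioi t).indicator fun _ => (‖f' (x - t)‖₊ : ℝ≥0∞) := by
          funext y
          by_cases hy : y ∈ Set.Ioi t
          · rw [Set.indicator_of_mem hy, hF_def,
              Set.indicator_of_mem (show (y, t) ∈ S from ⟨ht, hy⟩)]
          · rw [Set.indicator_of_notMem hy, hF_def,
              Set.indicator_of_notMem (fun hq => hy hq.2)]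
            simp
        rw [h3, lintegral_indicator_const measurableSet_Ioi,
          Set.indicator_of_mem (show t ∈ Set.Ioi (0:ℝ) from ht)]
      · have h3 : (fun y => (‖F (y, t)‖₊ : ℝ≥0∞)) = fun _ => 0 := by
          funext y
          rw [hF_def, Set.indicator_of_notMem (fun hq => ht hq.1)]
          simp
        rw [h3, lintegral_zero, Set.indicator_of_notMem (show t ∉ Set.Ioi (0:ℝ) from ht)]
    simp_rw [h2]
    rw [lintegral_indicator measurableSet_Ioi]
    have h4 : ∀ t ∈ Set.Ioi (0:ℝ),
        (‖f' (x - t)‖₊ : ℝ≥0∞) * φ₁ (Set.Ioi t) = (‖f' (x - t) * g t‖₊ : ℝ≥0∞) := by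
      intro t ht
      rw [hφ t ht, nnnorm_mul, ENNReal.coe_mul,
        ← enorm_eq_nnnorm (g t), Real.enorm_eq_ofReal (hg_pos t ht).le]
    rw [setLIntegral_congr_fun measurableSet_Ioi h4]
    exact hCap.2
  -- Fubini
  have hswap := integral_integral_swap (f := fun y t => F (y, t)) (μ := φ₁) (ν := volume) hF_int
  -- the inner integral over t
  have hLHS : ∀ y : ℝ, 0 < y → (∫ t, F (y, t)) = f x - f (x - y) := by
    intro y hy
    have h1 : (fun t => F (y, t)) = (Set.Ioo 0 y).indicator fun t => f' (x - t) := by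
      funext t
      by_cases ht : t ∈ Set.Ioo 0 y
      · rw [Set.indicator_of_mem ht, hF_def,
          Set.indicator_of_mem (show (y, t) ∈ S from ⟨ht.1, ht.2⟩)]
      · rw [Set.indicator_of_notMem ht, hF_def,
          Set.indicator_of_notMem (fun hq => ht ⟨hq.1, hq.2⟩)]
    rw [h1, integral_indicator measurableSet_Ioo]
    have h2 : (∫ t in Set.Ioo (0:ℝ) y, f' (x - t)) = ∫ t in (0:ℝ)..y, f' (x - t) := by
      rw [intervalIntegral.integral_of_le hy.le, integral_Ioc_eq_integral_Ioo]
    rw [h2]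
    have h3 : ∫ t in (0:ℝ)..y, f' (x - t)
        = (fun t => -f (x - t)) y - (fun t => -f (x - t)) 0 := by
      apply intervalIntegral.integral_eq_sub_of_hasDerivAt
      · intro t _
        have hsub : HasDerivAt (fun t : ℝ => x - t) (-1) t := (hasDerivAt_id t).const_sub x
        simpa [Function.comp_def, Pi.neg_def] using ((hder1 (x - t)).comp t hsub).neg
      · exact (hcont.intervalIntegrable 0 y)
    rw [h3]
    show -f (x - y) - -f (x - 0) = f x - f (x - y)
    rw [sub_zero]
    ring
  have hae : (fun y => ∫ t, F (y, t)) =ᵐ[φ₁] fun y => f x - f (x - y) := by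
    rw [Filter.EventuallyEq, ae_iff]
    refine measure_mono_null (fun y hy => ?_) hφ0
    by_contra h
    exact hy (hLHS y (not_le.mp (fun h' => h h')))
  -- the inner integral over y
  have hRHS : (fun t => ∫ y, F (y, t) ∂φ₁)
      = (Set.Ioi (0:ℝ)).indicator fun t => f' (x - t) * g t := by
    funext t
    by_cases ht : 0 < t
    · have h1 : (fun y => F (y, t)) = (Set.Ioi t).indicator fun _ => f' (x - t) := by
        funext y
        by_cases hy : y ∈ Set.Ioi t
        · rw [Set.indicator_of_mem hy, hF_def,
            Set.indicator_of_mem (show (y, t) ∈ S from ⟨ht, hy⟩)]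
        · rw [Set.indicator_of_notMem hy, hF_def,
            Set.indicator_of_notMem (fun hq => hy hq.2)]
      rw [h1, integral_indicator_const _ measurableSet_Ioi, measureReal_def, hφ t ht,
        ENNReal.toReal_ofReal (hg_pos t ht).le, Set.indicator_of_mem (show t ∈ Set.Ioi (0:ℝ) from ht), smul_eq_mul,
        mul_comm]
    · have h1 : (fun y => F (y, t)) = fun _ => (0:ℝ) := by
        funext y
        rw [hF_def, Set.indicator_of_notMem (fun hq => ht hq.1)]
      rw [h1, integral_zero, Set.indicator_of_notMem (show t ∉ Set.Ioi (0:ℝ) from ht)]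
  refine ⟨hF_int.integral_prod_left.congr hae, hCap, ?_⟩
  calc ∫ y, (f x - f (x - y)) ∂φ₁ = ∫ y, (∫ t, F (y, t)) ∂φ₁ := (integral_congr_ae hae).symm
    _ = ∫ t, (∫ y, F (y, t) ∂φ₁) := hswap
    _ = ∫ t, (Set.Ioi (0:ℝ)).indicator (fun t => f' (x - t) * g t) t := by rw [hRHS]
    _ = ∫ t in Set.Ioi (0:ℝ), f' (x - t) * g t := integral_indicator measurableSet_Ioi
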